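/- Let R₊ > 0 and let k be a symmetric, traceless, divergence-free C² 2-tensor field with respect to the flat metric on {x ∈ ℝ² : |x| > R₊}, whose components are bounded and extend continuously to {|x| ≥ R₊} with k = 0 on the circle |x| = R₊. Then k ≡ 0. -/

import Mathlib

/-- Partial derivative with respect to the first coordinate. -/
noncomputable def pd1 (f : ℝ × ℝ → ℝ) (p : ℝ × ℝ) : ℝ :=
  deriv (fun x => f (x, p.2)) p.1

/-- Partial derivative with respect to the second coordinate. -/
noncomputable def pd2 (f : ℝ × ℝ → ℝ) (p : ℝ × ℝ) : ℝ :=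
  deriv (fun y => f (p.1, y)) p.2

section helpers

lemma pd1_eq_fderiv {u : ℝ × ℝ → ℝ} {p : ℝ × ℝ} (h : DifferentiableAt ℝ u p) :
    pd1 u p = fderiv ℝ u p (1, 0) := by
  have h1 : HasDerivAt (fun x : ℝ => (x, p.2)) ((1 : ℝ), (0 : ℝ)) p.1 :=
    (hasDerivAt_id p.1).prodMk (hasDerivAt_const _ _)
  have h2 : HasFDerivAt u (fderiv ℝ u p) ((p.1, p.2)) := by
    simpa using h.hasFDerivAt
  exact (h2.comp_hasDerivAt p.1 h1).deriv

lemma pd2_eq_fderiv {u : ℝ × ℝ → ℝ} {p : ℝ × ℝ} (h : DifferentiableAt ℝ u p) :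
    pd2 u p = fderiv ℝ u p (0, 1) := by
  have h1 : HasDerivAt (fun y : ℝ => (p.1, y)) ((0 : ℝ), (1 : ℝ)) p.2 :=
    (hasDerivAt_const _ _).prodMk (hasDerivAt_id p.2)
  have h2 : HasFDerivAt u (fderiv ℝ u p) ((p.1, p.2)) := by
    simpa using h.hasFDerivAt
  exact (h2.comp_hasDerivAt p.2 h1).deriv

lemma pd1_congr {u v : ℝ × ℝ → ℝ} {p : ℝ × ℝ} (h : u =ᶠ[nhds p] v) :
    pd1 u p = pd1 v p := by
  apply Filter.EventuallyEq.deriv_eq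
  have hc : Continuous (fun x : ℝ => (x, p.2)) := by fun_prop
  have ht : Filter.Tendsto (fun x : ℝ => (x, p.2)) (nhds p.1) (nhds p) := by
    have := hc.continuousAt (x := p.1); exact this
  exact h.comp_tendsto ht

lemma pd2_congr {u v : ℝ × ℝ → ℝ} {p : ℝ × ℝ} (h : u =ᶠ[nhds p] v) :
    pd2 u p = pd2 v p := by
  apply Filter.EventuallyEq.deriv_eq
  have hc : Continuous (fun y : ℝ => (p.1, y)) := by fun_prop
  have ht : Filter.Tendsto (fun y : ℝ => (p.1, y)) (nhds p.2) (nhds p) := by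
    have := hc.continuousAt (x := p.2); exact this
  exact h.comp_tendsto ht

lemma pd2_neg (u : ℝ × ℝ → ℝ) (p : ℝ × ℝ) : pd2 (fun q => -u q) p = -pd2 u p := by
  simp [pd2, deriv.neg]

lemma cr_differentiable {u v : ℝ × ℝ → ℝ} {z : ℂ}
    (hu : DifferentiableAt ℝ u (z.re, z.im)) (hv : DifferentiableAt ℝ v (z.re, z.im))
    (h1 : pd1 u (z.re, z.im) + pd2 v (z.re, z.im) = 0)
    (h2 : pd1 v (z.re, z.im) - pd2 u (z.re, z.im) = 0) :
    DifferentiableAt ℂ (fun w : ℂ => (u (w.re, w.im) : ℂ) - (v (w.re, w.im)) * Complex.I) z := by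
  set p : ℝ × ℝ := (z.re, z.im) with hp
  set Du := fderiv ℝ u p with hDu
  set Dv := fderiv ℝ v p with hDv
  set a := Du (1, 0) with ha
  set b := Dv (1, 0) with hb
  have hva : Dv (0, 1) = -a := by
    rw [pd1_eq_fderiv hu, pd2_eq_fderiv hv] at h1
    linarith
  have hub : Du (0, 1) = b := by
    rw [pd1_eq_fderiv hv, pd2_eq_fderiv hu] at h2
    linarith
  set c : ℂ := (a : ℂ) - (b : ℂ) * Complex.I with hc
  set L : ℂ →L[ℂ] ℂ := c • ContinuousLinearMap.id ℂ ℂ with hL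
  set e : ℂ →L[ℝ] ℝ × ℝ := Complex.equivRealProdCLM.toContinuousLinearMap with he
  have huC : HasFDerivAt (fun q : ℝ × ℝ => (u q : ℂ)) (Complex.ofRealCLM.comp Du) p :=
    Complex.ofRealCLM.hasFDerivAt.comp p hu.hasFDerivAt
  have hvC : HasFDerivAt (fun q : ℝ × ℝ => (v q : ℂ)) (Complex.ofRealCLM.comp Dv) p :=
    Complex.ofRealCLM.hasFDerivAt.comp p hv.hasFDerivAt
  have hvI := hvC.mul_const Complex.I
  have hG : HasFDerivAt (fun q : ℝ × ℝ => (u q : ℂ) - (v q : ℂ) * Complex.I)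
      ((Complex.ofRealCLM.comp Du) - Complex.I • (Complex.ofRealCLM.comp Dv)) p :=
    huC.sub hvI
  have hez : e z = p := by simp [he, hp]
  have hF : HasFDerivAt ((fun q : ℝ × ℝ => (u q : ℂ) - (v q : ℂ) * Complex.I) ∘ e)
      (((Complex.ofRealCLM.comp Du) - Complex.I • (Complex.ofRealCLM.comp Dv)).comp e) z := by
    exact HasFDerivAt.comp z (hez ▸ hG) e.hasFDerivAt
  have hfun : (fun w : ℂ => (u (w.re, w.im) : ℂ) - (v (w.re, w.im)) * Complex.I)
      = (fun q : ℝ × ℝ => (u q : ℂ) - (v q : ℂ) * Complex.I) ∘ e := by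
    funext w; simp [he]
  have hrs : L.restrictScalars ℝ
      = ((Complex.ofRealCLM.comp Du) - Complex.I • (Complex.ofRealCLM.comp Dv)).comp e := by
    apply ContinuousLinearMap.ext
    intro w
    have hw : (w.re, w.im) = w.re • ((1:ℝ), (0:ℝ)) + w.im • ((0:ℝ), (1:ℝ)) := by
      simp [Prod.ext_iff]
    have hDuw : Du (w.re, w.im) = w.re * a + w.im * b := by
      rw [hw, map_add, map_smul, map_smul, hub]; simp [smul_eq_mul, ← ha]
    have hDvw : Dv (w.re, w.im) = w.re * b - w.im * a := by
      rw [hw, map_add, map_smul, map_smul, hva]; simp [smul_eq_mul]; ring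
    have hLw : (L.restrictScalars ℝ) w = c * w := by
      simp [hL, smul_eq_mul]
    have hew : e w = (w.re, w.im) := by simp [he]
    rw [hLw]
    simp only [ContinuousLinearMap.comp_apply, ContinuousLinearMap.sub_apply,
      ContinuousLinearMap.smul_apply, hew, hDuw, hDvw]
    simp only [hc, Complex.ofRealCLM_apply, smul_eq_mul]
    apply Complex.ext <;> simp <;> ring
  have : HasFDerivAt (fun w : ℂ => (u (w.re, w.im) : ℂ) - (v (w.re, w.im)) * Complex.I) L z := by
    rw [hfun]
    exact hasFDerivAt_of_restrictScalars ℝ hF hrs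
  exact this.differentiableAt

lemma exterior_holo_vanishes {Rp : ℝ} (hRp : 0 < Rp) {f : ℂ → ℂ} {C : ℝ}
    (hdiff : ∀ z : ℂ, Rp < ‖z‖ → DifferentiableAt ℂ f z)
    (hcont : ContinuousOn f {z : ℂ | Rp ≤ ‖z‖})
    (hbd : ∀ z : ℂ, Rp ≤ ‖z‖ → ‖f z‖ ≤ C)
    (hzero : ∀ z : ℂ, ‖z‖ = Rp → f z = 0) :
    ∀ z : ℂ, Rp < ‖z‖ → f z = 0 := by
  have hC : 0 ≤ C := by
    have := hbd (Rp : ℂ) (by simp [Complex.norm_real, abs_of_pos hRp])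
    exact le_trans (norm_nonneg _) this
  intro z₀ hz₀
  set g : ℂ → ℂ := fun z => f z * ((Rp : ℂ) / z) with hg
  have key : ∀ R : ℝ, ‖z₀‖ < R → ‖g z₀‖ ≤ C * Rp / R := by
    intro R hR
    have hRpR : Rp < R := lt_trans hz₀ hR
    have hR0 : 0 < R := lt_trans hRp hRpR
    set s : Set ℂ := Metric.ball 0 R \ Metric.closedBall 0 Rp with hs
    have hmem : ∀ z : ℂ, z ∈ s ↔ Rp < ‖z‖ ∧ ‖z‖ < R := by
      intro z
      simp [hs, Complex.dist_eq, and_comm]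
    have hbdd : Bornology.IsBounded s :=
      Metric.isBounded_ball.subset Set.diff_subset
    have hsub : closure s ⊆ {z : ℂ | Rp ≤ ‖z‖} := by
      have h1 : s ⊆ (Metric.ball (0:ℂ) Rp)ᶜ := by
        intro z hz
        rw [hmem] at hz
        simp [Complex.dist_eq]
        exact le_of_lt hz.1
      have h2 : IsClosed ((Metric.ball (0:ℂ) Rp)ᶜ) := Metric.isOpen_ball.isClosed_compl
      intro z hz
      have := h2.closure_subset_iff.mpr h1 hz
      simpa [Complex.dist_eq] using this
    have hdc : DiffContOnCl ℂ g s := by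
      constructor
      · intro z hz
        rw [hmem] at hz
        have hz0 : z ≠ 0 := by
          intro h; rw [h] at hz; simp at hz; linarith [hz.1]
        exact ((hdiff z hz.1).mul
          ((differentiableAt_const _).div differentiableAt_id hz0)).differentiableWithinAt
      · apply ContinuousOn.mono _ hsub
        apply hcont.mul
        apply ContinuousOn.div continuousOn_const continuousOn_id
        intro z hz h
        rw [id_eq] at h
        rw [h] at hz
        simp at hz
        linarith
    have hfr : ∀ z ∈ frontier s, ‖g z‖ ≤ C * Rp / R := by
      intro z hz
      have hfr2 : frontier s ⊆ Metric.sphere 0 R ∪ Metric.sphere 0 Rp := by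
        have hseq : s = Metric.ball 0 R ∩ (Metric.closedBall 0 Rp)ᶜ := rfl
        rw [hseq]
        intro w hw
        rcases frontier_inter_subset _ _ hw with h | h
        · left
          rw [← frontier_ball (0:ℂ) (ne_of_gt hR0)]
          exact h.1
        · right
          rw [← frontier_closedBall (0:ℂ) (ne_of_gt hRp)]
          rw [frontier_compl] at h
          exact h.2
      rcases hfr2 hz with h | h
      · have habs : ‖z‖ = R := by simpa [Complex.dist_eq] using h
        have hgeq : ‖g z‖ = ‖f z‖ * (Rp / R) := by
          rw [hg]
          simp only [norm_mul]
          congr 1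
          rw [norm_div]
          simp [Complex.norm_real, abs_of_pos hRp, habs]
        rw [hgeq]
        have h1 : ‖f z‖ ≤ C := hbd z (by rw [habs]; exact le_of_lt hRpR)
        have h2 : 0 ≤ Rp / R := div_nonneg (le_of_lt hRp) (le_of_lt hR0)
        calc ‖f z‖ * (Rp / R) ≤ C * (Rp / R) := mul_le_mul_of_nonneg_right h1 h2
          _ = C * Rp / R := by ring
      · have habs : ‖z‖ = Rp := by simpa [Complex.dist_eq] using h
        have hgz : g z = 0 := by rw [hg]; simp [hzero z habs]
        rw [hgz]
        simp
        positivity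
    have hcl : z₀ ∈ closure s := subset_closure (by rw [hmem]; exact ⟨hz₀, hR⟩)
    exact Complex.norm_le_of_forall_mem_frontier_norm_le hbdd hdc hfr hcl
  have hgz : ‖g z₀‖ = ‖f z₀‖ * (Rp / ‖z₀‖) := by
    rw [hg]
    simp only [norm_mul]
    congr 1
    rw [norm_div]
    simp [Complex.norm_real, abs_of_pos hRp]
  have htend : Filter.Tendsto (fun R : ℝ => C * Rp / R) Filter.atTop (nhds 0) :=
    Filter.Tendsto.div_atTop tendsto_const_nhds Filter.tendsto_id
  have hle : ‖g z₀‖ ≤ 0 := by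
    apply ge_of_tendsto htend
    filter_upwards [Filter.eventually_gt_atTop (‖z₀‖)] with R hR
    exact key R hR
  have hge : 0 ≤ ‖g z₀‖ := norm_nonneg _
  have h0 : ‖f z₀‖ * (Rp / ‖z₀‖) = 0 := by rw [← hgz]; linarith
  have habs0 : 0 < ‖z₀‖ := lt_trans hRp hz₀
  have hfz : ‖f z₀‖ = 0 := by
    rcases mul_eq_zero.mp h0 with h | h
    · exact h
    · exfalso
      have : 0 < Rp / ‖z₀‖ := div_pos hRp habs0
      linarith
  simpa using hfz

end helpers

/-- A bounded transverse-traceless (symmetric, traceless, divergence-free) C²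
2-tensor field on the exterior {|x| > R₊} of a disk in the flat plane, extending
continuously to the boundary circle where it vanishes, vanishes identically. -/
theorem tt_tensor_exterior_vanishes (Rp : ℝ) (hRp : 0 < Rp)
    (k : ℝ × ℝ → Matrix (Fin 2) (Fin 2) ℝ)
    (hsym : ∀ p : ℝ × ℝ, Rp ^ 2 < p.1 ^ 2 + p.2 ^ 2 → k p 0 1 = k p 1 0)
    (htr : ∀ p : ℝ × ℝ, Rp ^ 2 < p.1 ^ 2 + p.2 ^ 2 → k p 0 0 + k p 1 1 = 0)
    (hdiv : ∀ p : ℝ × ℝ, Rp ^ 2 < p.1 ^ 2 + p.2 ^ 2 → ∀ j : Fin 2,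
      pd1 (fun q => k q 0 j) p + pd2 (fun q => k q 1 j) p = 0)
    (hC2 : ∀ i j : Fin 2,
      ContDiffOn ℝ 2 (fun p => k p i j) {p : ℝ × ℝ | Rp ^ 2 < p.1 ^ 2 + p.2 ^ 2})
    (hcont : ∀ i j : Fin 2,
      ContinuousOn (fun p => k p i j) {p : ℝ × ℝ | Rp ^ 2 ≤ p.1 ^ 2 + p.2 ^ 2})
    (hbdd : ∃ Cb : ℝ, ∀ i j : Fin 2, ∀ p : ℝ × ℝ,
      Rp ^ 2 ≤ p.1 ^ 2 + p.2 ^ 2 → |k p i j| ≤ Cb)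
    (hbc : ∀ p : ℝ × ℝ, p.1 ^ 2 + p.2 ^ 2 = Rp ^ 2 → k p = 0) :
    ∀ p : ℝ × ℝ, Rp ^ 2 ≤ p.1 ^ 2 + p.2 ^ 2 → k p = 0 := by
  obtain ⟨Cb, hCb⟩ := hbdd
  have hUopen : IsOpen {p : ℝ × ℝ | Rp ^ 2 < p.1 ^ 2 + p.2 ^ 2} := by
    have hcc : Continuous (fun p : ℝ × ℝ => p.1 ^ 2 + p.2 ^ 2) := by fun_prop
    exact isOpen_lt continuous_const hcc
  -- abs correspondences
  have habs2 : ∀ z : ℂ, ‖z‖ ^ 2 = z.re ^ 2 + z.im ^ 2 := by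
    intro z
    rw [Complex.sq_norm, Complex.normSq_apply]; ring
  have hcorr : ∀ z : ℂ, Rp < ‖z‖ ↔ Rp ^ 2 < z.re ^ 2 + z.im ^ 2 := by
    intro z
    rw [← habs2]
    constructor
    · intro h; nlinarith [norm_nonneg z]
    · intro h; nlinarith [norm_nonneg z]
  have hcorr_le : ∀ z : ℂ, Rp ≤ ‖z‖ ↔ Rp ^ 2 ≤ z.re ^ 2 + z.im ^ 2 := by
    intro z
    rw [← habs2]
    constructor
    · intro h; nlinarith [norm_nonneg z]
    · intro h; nlinarith [norm_nonneg z]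
  set f : ℂ → ℂ := fun w =>
    ((k (w.re, w.im) 0 0 : ℝ) : ℂ) - ((k (w.re, w.im) 0 1 : ℝ) : ℂ) * Complex.I with hf
  -- differentiability of components
  have hdiffc : ∀ (i j : Fin 2) (p : ℝ × ℝ), Rp ^ 2 < p.1 ^ 2 + p.2 ^ 2 →
      DifferentiableAt ℝ (fun q => k q i j) p := by
    intro i j p hp
    exact ((hC2 i j).contDiffAt (hUopen.mem_nhds hp)).differentiableAt two_ne_zero
  -- f is holomorphic on the exterior
  have hfd : ∀ z : ℂ, Rp < ‖z‖ → DifferentiableAt ℂ f z := by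
    intro z hz
    have hp : Rp ^ 2 < z.re ^ 2 + z.im ^ 2 := (hcorr z).mp hz
    have hpU : (z.re, z.im) ∈ {p : ℝ × ℝ | Rp ^ 2 < p.1 ^ 2 + p.2 ^ 2} := hp
    have hnhds : {p : ℝ × ℝ | Rp ^ 2 < p.1 ^ 2 + p.2 ^ 2} ∈ nhds (z.re, z.im) :=
      hUopen.mem_nhds hpU
    have h1 : pd1 (fun q => k q 0 0) (z.re, z.im) + pd2 (fun q => k q 0 1) (z.re, z.im) = 0 := by
      have e1 := hdiv (z.re, z.im) hp 0
      have e2 : pd2 (fun q => k q 1 0) (z.re, z.im) = pd2 (fun q => k q 0 1) (z.re, z.im) := by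
        apply pd2_congr
        filter_upwards [hnhds] with q hq
        exact (hsym q hq).symm
      rw [e2] at e1
      exact e1
    have h2 : pd1 (fun q => k q 0 1) (z.re, z.im) - pd2 (fun q => k q 0 0) (z.re, z.im) = 0 := by
      have e1 := hdiv (z.re, z.im) hp 1
      have e2 : pd2 (fun q => k q 1 1) (z.re, z.im) = pd2 (fun q => -k q 0 0) (z.re, z.im) := by
        apply pd2_congr
        filter_upwards [hnhds] with q hq
        have := htr q hq
        linarith
      rw [e2, pd2_neg] at e1
      linarith
    exact cr_differentiable (hdiffc 0 0 _ hp) (hdiffc 0 1 _ hp) h1 h2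
  -- continuity of f on the closed exterior
  have hfc : ContinuousOn f {z : ℂ | Rp ≤ ‖z‖} := by
    have hmap : Set.MapsTo (fun z : ℂ => (z.re, z.im)) {z : ℂ | Rp ≤ ‖z‖}
        {p : ℝ × ℝ | Rp ^ 2 ≤ p.1 ^ 2 + p.2 ^ 2} := by
      intro z hz
      exact (hcorr_le z).mp hz
    have hcmap : Continuous (fun z : ℂ => (z.re, z.im)) := by fun_prop
    have h00 : ContinuousOn (fun z : ℂ => ((k (z.re, z.im) 0 0 : ℝ) : ℂ))
        {z : ℂ | Rp ≤ ‖z‖} :=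
      Complex.continuous_ofReal.comp_continuousOn
        ((hcont 0 0).comp hcmap.continuousOn hmap)
    have h01 : ContinuousOn (fun z : ℂ => ((k (z.re, z.im) 0 1 : ℝ) : ℂ))
        {z : ℂ | Rp ≤ ‖z‖} :=
      Complex.continuous_ofReal.comp_continuousOn
        ((hcont 0 1).comp hcmap.continuousOn hmap)
    exact h00.sub (h01.mul continuousOn_const)
  -- bound
  have hfb : ∀ z : ℂ, Rp ≤ ‖z‖ → ‖f z‖ ≤ Cb + Cb := by
    intro z hz
    have hp : Rp ^ 2 ≤ z.re ^ 2 + z.im ^ 2 := (hcorr_le z).mp hz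
    have h0 := hCb 0 0 (z.re, z.im) hp
    have h1 := hCb 0 1 (z.re, z.im) hp
    calc ‖f z‖ ≤ ‖((k (z.re, z.im) 0 0 : ℝ) : ℂ)‖ + ‖((k (z.re, z.im) 0 1 : ℝ) : ℂ) * Complex.I‖ :=
          norm_sub_le _ _
      _ = |k (z.re, z.im) 0 0| + |k (z.re, z.im) 0 1| := by
          rw [norm_mul]
          simp [Complex.norm_real]
      _ ≤ Cb + Cb := add_le_add h0 h1
  -- zero on the circle
  have hfz : ∀ z : ℂ, ‖z‖ = Rp → f z = 0 := by
    intro z hz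
    have hp : z.re ^ 2 + z.im ^ 2 = Rp ^ 2 := by rw [← habs2, hz]
    have := hbc (z.re, z.im) hp
    rw [hf]
    simp only [this]
    simp
  have hmain := exterior_holo_vanishes hRp hfd hfc hfb hfz
  -- conclude
  intro p hp
  rcases lt_or_eq_of_le hp with hlt | heq
  · set z : ℂ := ⟨p.1, p.2⟩ with hz
    have hzre : z.re = p.1 := rfl
    have hzim : z.im = p.2 := rfl
    have habsz : Rp < ‖z‖ := by
      rw [hcorr z, hzre, hzim]
      exact hlt
    have h := hmain z habsz
    rw [hf] at h
    simp only [hzre, hzim] at h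
    have hpair : (p.1, p.2) = p := rfl
    rw [hpair] at h
    rw [Complex.ext_iff] at h
    simp at h
    obtain ⟨h00, h01⟩ := h
    have h10 : k p 1 0 = 0 := by rw [← hsym p hlt]; exact h01
    have h11 : k p 1 1 = 0 := by have := htr p hlt; linarith
    ext i j
    fin_cases i <;> fin_cases j <;> simp [h00, h01, h10, h11]
  · exact hbc p heq.symm
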